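/- Let p ∈ (1/2, 1), let μ(t) = (t+p)/2 for t ∈ [1/2, p], and define h(t) = p·(1-t)·(1-μ(t)) - (1-p)·t·μ(t). Then h(1/2) > 0 and h(p) < 0, and h is strictly decreasing on [1/2, p]; hence the N=3 single-expert delegation equilibrium threshold exists, is unique, and lies strictly in (1/2, p). -/
import Mathlib


theorem stmt_13 (p : ℝ) (hp : p ∈ Set.Ioo (1/2 : ℝ) 1)
    (μ h : ℝ → ℝ) (hμ : ∀ t, μ t = (t + p) / 2)
    (hh : ∀ t, h t = p * (1 - t) * (1 - μ t) - (1 - p) * t * μ t) :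
    h (1/2) > 0 ∧ h p < 0 ∧ StrictAntiOn h (Set.Icc (1/2) p) ∧
      ∃! t : ℝ, t ∈ Set.Ioo (1/2 : ℝ) p ∧ h t = 0 := by
  obtain ⟨hp1, hp2⟩ := hp
  have hhalf : h (1/2) > 0 := by
    rw [hh, hμ]; nlinarith
  have hpneg : h p < 0 := by
    rw [hh, hμ]
    nlinarith [mul_pos (mul_pos (by linarith : (0:ℝ) < p) (by linarith : (0:ℝ) < 1 - p)) (by linarith : (0:ℝ) < 2*p - 1)]
  have hanti : StrictAntiOn h (Set.Icc (1/2) p) := by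
    intro x hx y hy hxy
    rw [hh, hμ, hh, hμ]
    have hx1 := hx.1; have hx2 := hx.2
    have hy1 := hy.1; have hy2 := hy.2
    nlinarith [mul_pos (sub_pos.mpr hxy) (sub_pos.mpr hp1)]
  refine ⟨hhalf, hpneg, hanti, ?_⟩
  have hcont : ContinuousOn h (Set.Icc (1/2) p) := by
    have : h = fun t => p * (1 - t) * (1 - (t + p) / 2) - (1 - p) * t * ((t + p) / 2) := by
      funext t; rw [hh, hμ]
    rw [this]; fun_prop
  have hle : (1/2 : ℝ) ≤ p := le_of_lt hp1
  have h0 : (0 : ℝ) ∈ Set.Ioo (h p) (h (1/2)) := ⟨hpneg, hhalf⟩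
  have := intermediate_value_Ioo' hle hcont h0
  obtain ⟨t, ht, htv⟩ := this
  refine ⟨t, ⟨ht, htv⟩, ?_⟩
  rintro s ⟨hs, hsv⟩
  by_contra hne
  have hsI : s ∈ Set.Icc (1/2) p := ⟨le_of_lt hs.1, le_of_lt hs.2⟩
  have htI : t ∈ Set.Icc (1/2) p := ⟨le_of_lt ht.1, le_of_lt ht.2⟩
  rcases lt_or_gt_of_ne hne with hlt | hlt
  · have := hanti hsI htI hlt; rw [hsv, htv] at this; exact lt_irrefl _ this
  · have := hanti htI hsI hlt; rw [hsv, htv] at this; exact lt_irrefl _ this
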